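/- Fix d ≥ 2 and t ≥ √d. The function ν(μ) = (t - (d + 1 - d/μ²)/μ)(t - μ) is decreasing in μ on the interval (√d, ∞). -/

import Mathlib

theorem nu_hasDerivAt (d t x : ℝ) (hx : x ≠ 0) :
    HasDerivAt (fun μ : ℝ => (t - (d + 1 - d / μ ^ 2) / μ) * (t - μ))
      (-((t * (x ^ 4 - (d + 1) * x ^ 2 + 3 * d) - 2 * d * x) / x ^ 4)) x := by
  have h2 : HasDerivAt (fun μ : ℝ => μ ^ 2) (2 * x) x := by
    simpa using hasDerivAt_pow 2 x
  have hne2 : x ^ 2 ≠ 0 := pow_ne_zero _ hx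
  have h3 : HasDerivAt (fun μ : ℝ => d / μ ^ 2)
      ((0 * x ^ 2 - d * (2 * x)) / (x ^ 2) ^ 2) x :=
    (hasDerivAt_const x d).div h2 hne2
  have h4 : HasDerivAt (fun μ : ℝ => d + 1 - d / μ ^ 2)
      (0 - (0 * x ^ 2 - d * (2 * x)) / (x ^ 2) ^ 2) x :=
    (hasDerivAt_const x (d + 1)).sub h3
  have h5 : HasDerivAt (fun μ : ℝ => (d + 1 - d / μ ^ 2) / μ)
      (((0 - (0 * x ^ 2 - d * (2 * x)) / (x ^ 2) ^ 2) * x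
        - (d + 1 - d / x ^ 2) * 1) / x ^ 2) x :=
    h4.div (hasDerivAt_id x) hx
  have h6 : HasDerivAt (fun μ : ℝ => t - (d + 1 - d / μ ^ 2) / μ)
      (0 - (((0 - (0 * x ^ 2 - d * (2 * x)) / (x ^ 2) ^ 2) * x
        - (d + 1 - d / x ^ 2) * 1) / x ^ 2)) x :=
    (hasDerivAt_const x t).sub h5
  have h7 : HasDerivAt (fun μ : ℝ => t - μ) (0 - 1) x :=
    (hasDerivAt_const x t).sub (hasDerivAt_id x)
  have h8 : HasDerivAt (fun μ : ℝ => (t - (d + 1 - d / μ ^ 2) / μ) * (t - μ)) _ x := h6.mul h7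
  convert h8 using 1
  field_simp
  ring

/-- For `d ≥ 2` and `t ≥ √d`, the function
`ν(μ) = (t - (d + 1 - d/μ²)/μ)(t - μ)` is decreasing on `(√d, ∞)`. -/
theorem nu_strictAntiOn (d t : ℝ) (hd : 2 ≤ d) (ht : Real.sqrt d ≤ t) :
    StrictAntiOn (fun μ : ℝ => (t - (d + 1 - d / μ ^ 2) / μ) * (t - μ))
      (Set.Ioi (Real.sqrt d)) := by
  have hd0 : (0 : ℝ) < d := by linarith
  have hs : 0 < Real.sqrt d := Real.sqrt_pos.2 hd0
  have hsq : Real.sqrt d ^ 2 = d := Real.sq_sqrt hd0.le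
  have ht0 : 0 < t := lt_of_lt_of_le hs ht
  have ht2 : d ≤ t ^ 2 := by nlinarith [Real.sqrt_nonneg d]
  apply strictAntiOn_of_deriv_neg (convex_Ioi _)
  · intro x hx
    have hx0 : 0 < x := lt_trans hs hx
    exact (nu_hasDerivAt d t x hx0.ne').continuousAt.continuousWithinAt
  · intro x hx
    rw [interior_Ioi] at hx
    have hxs : Real.sqrt d < x := hx
    have hx0 : 0 < x := lt_trans hs hxs
    rw [(nu_hasDerivAt d t x hx0.ne').deriv]
    have hx2 : d < x ^ 2 := by nlinarith
    -- key inequality : 2*d*x < t*(x^4 - (d+1)*x^2 + 3*d)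
    set P : ℝ := x ^ 4 - (d + 1) * x ^ 2 + 3 * d with hP
    have hPpos : 0 < P := by nlinarith [mul_pos (sub_pos.2 hx2) (by nlinarith : (0:ℝ) < x ^ 2 - 1)]
    have hu : 0 < x ^ 2 - d := sub_pos.2 hx2
    have hQ : 4 * d * x ^ 2 < P ^ 2 := by
      have hid : P ^ 2 - 4 * d * x ^ 2 = (x ^ 2 - d) ^ 4 + (2 * d - 2) * (x ^ 2 - d) ^ 3
          + (d + 1) ^ 2 * (x ^ 2 - d) ^ 2 + 4 * d * (d - 2) * (x ^ 2 - d) := by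
        rw [hP]; ring
      nlinarith [pow_pos hu 4, mul_pos (by nlinarith : (0:ℝ) < 2 * d - 2 + 1) (pow_pos hu 3),
        mul_pos (by positivity : (0:ℝ) < (d + 1) ^ 2) (pow_pos hu 2),
        mul_nonneg (by nlinarith : (0:ℝ) ≤ 4 * d * (d - 2)) hu.le]
    have hkey : 2 * d * x < t * P := by
      have h1 : (2 * d * x) ^ 2 < (t * P) ^ 2 := by nlinarith [sq_nonneg P]
      have h2 : 0 ≤ t * P := le_of_lt (mul_pos ht0 hPpos)
      exact lt_of_pow_lt_pow_left₀ 2 h2 h1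
    have hx4 : 0 < x ^ 4 := by positivity
    have : 0 < (t * P - 2 * d * x) / x ^ 4 := div_pos (by linarith) hx4
    have hrw : t * (x ^ 4 - (d + 1) * x ^ 2 + 3 * d) - 2 * d * x = t * P - 2 * d * x := by
      rw [hP]
    rw [hrw]
    linarith
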